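/- For the loop polynomial W = x_1^{a_1}x_2 + x_2^{a_2}x_3 + ... + x_{N-1}^{a_{N-1}}x_N + x_N^{a_N}x_1 with all a_i ≥ 2, the exponent matrix E_W (with 1's on the cyclic superdiagonal and a_i on the diagonal) has determinant ∏_{i=1}^N a_i + (-1)^{N+1}, which is nonzero; hence loop polynomials are invertible. -/

import Mathlib

open Matrix

/-- The exponent matrix of the loop polynomial
`W = x₁^{a₁}x₂ + … + x_{N-1}^{a_{N-1}}x_N + x_N^{a_N}x₁`:
`a i` on the diagonal and `1` on the cyclic superdiagonal. Its determinant is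
`∏ a_i + (-1)^{N+1}`, which is nonzero when all `a_i ≥ 2`; hence loop
polynomials are invertible. -/
theorem loop_det (N : ℕ) (hN : 2 ≤ N) (a : Fin N → ℤ) (ha : ∀ i, 2 ≤ a i) :
    (Matrix.of (fun i j : Fin N =>
        if j = i then a i else if (j : ℕ) = ((i : ℕ) + 1) % N then 1 else 0)).det
        = (∏ i, a i) + (-1) ^ (N + 1) ∧
    (Matrix.of (fun i j : Fin N =>
        if j = i then a i else if (j : ℕ) = ((i : ℕ) + 1) % N then 1 else 0)).det
      ≠ 0 := by
  obtain ⟨n, rfl⟩ : ∃ n, N = n + 1 := ⟨N - 1, by omega⟩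
  have hn : 1 ≤ n := by omega
  set M : Matrix (Fin (n+1)) (Fin (n+1)) ℤ := Matrix.of (fun i j : Fin (n+1) =>
      if j = i then a i else if (j : ℕ) = ((i : ℕ) + 1) % (n+1) then 1 else 0) with hM
  have hdet : M.det = (∏ i, a i) + (-1) ^ (n + 1 + 1) := by
    rw [Matrix.det_succ_column_zero]
    rw [Finset.sum_eq_add_of_mem (0 : Fin (n+1)) (Fin.last n)
      (Finset.mem_univ _) (Finset.mem_univ _)
      (by simp [Fin.ext_iff]; omega)
      (by
        intro c _ hc
        have h1 : M c 0 = 0 := by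
          have hc0 : (c : ℕ) ≠ 0 := fun h => hc.1 (Fin.ext h)
          have hcn : (c : ℕ) ≠ n := fun h => hc.2 (Fin.ext (by simp [h]))
          have hcl : (c : ℕ) < n + 1 := c.isLt
          simp only [hM, Matrix.of_apply]
          rw [if_neg, if_neg]
          · simp only [Fin.val_zero]
            rw [Nat.mod_eq_of_lt (by omega)]
            omega
          · exact fun h => hc.1 h.symm
        rw [h1]; ring)]
    have hminor0 : (M.submatrix (Fin.succAbove 0) Fin.succ).det = ∏ j : Fin n, a j.succ := by
      rw [Matrix.det_of_upperTriangular]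
      · refine Finset.prod_congr rfl fun j _ => ?_
        simp [hM, Fin.succAbove_zero]
      · intro j k hk
        simp only [Matrix.submatrix_apply, Fin.succAbove_zero, hM, Matrix.of_apply]
        have hjk : (k : ℕ) < (j : ℕ) := hk
        have hjn : (j : ℕ) < n := j.isLt
        rw [if_neg, if_neg]
        · simp only [Fin.val_succ]
          rcases Nat.lt_or_ge ((j : ℕ) + 1 + 1) (n + 1) with h | h
          · rw [Nat.mod_eq_of_lt h]; omega
          · have : (j : ℕ) + 1 + 1 = n + 1 := by omega
            rw [this, Nat.mod_self]; omega
        · simp [Fin.ext_iff]; omega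
    have hminorl : (M.submatrix (Fin.succAbove (Fin.last n)) Fin.succ).det = 1 := by
      rw [Matrix.det_of_lowerTriangular]
      · rw [Finset.prod_eq_one]
        intro j _
        simp only [Matrix.submatrix_apply, Fin.succAbove_last, hM, Matrix.of_apply]
        have hjn : (j : ℕ) < n := j.isLt
        rw [if_neg, if_pos]
        · simp only [Fin.val_succ, Fin.coe_castSucc]
          rw [Nat.mod_eq_of_lt (by omega)]
        · simp [Fin.ext_iff]
      · intro j k hk
        have hjk : (j : ℕ) < (k : ℕ) := hk
        have hkn : (k : ℕ) < n := k.isLt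
        simp only [Matrix.submatrix_apply, Fin.succAbove_last, hM, Matrix.of_apply]
        rw [if_neg, if_neg]
        · simp only [Fin.val_succ, Fin.coe_castSucc]
          rw [Nat.mod_eq_of_lt (by omega)]
          omega
        · simp [Fin.ext_iff]; omega
    have hM00 : M 0 0 = a 0 := by simp [hM]
    have hMl0 : M (Fin.last n) 0 = 1 := by
      simp only [hM, Matrix.of_apply]
      rw [if_neg, if_pos]
      · simp [Fin.last]
      · simp [Fin.ext_iff]; omega
    rw [hminor0, hminorl, hM00, hMl0, Fin.prod_univ_succ a]
    simp [Fin.val_last]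
    ring
  refine ⟨hdet, ?_⟩
  rw [hdet]
  have hprod : (2 : ℤ) ^ (n + 1) ≤ ∏ i, a i := by
    calc (2 : ℤ) ^ (n + 1) = ∏ _i : Fin (n+1), (2 : ℤ) := by
          rw [Finset.prod_const, Finset.card_univ, Fintype.card_fin]
      _ ≤ ∏ i, a i := Finset.prod_le_prod (fun i _ => by norm_num) (fun i _ => ha i)
  have h2 : (4 : ℤ) ≤ 2 ^ (n + 1) := by
    calc (4 : ℤ) = 2 ^ 2 := by norm_num
      _ ≤ 2 ^ (n + 1) := pow_le_pow_right₀ (by norm_num) (by omega)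
  have h3 : (-1 : ℤ) ^ (n + 1 + 1) = 1 ∨ (-1 : ℤ) ^ (n + 1 + 1) = -1 := by
    rcases Nat.even_or_odd (n+1+1) with h | h
    · exact Or.inl h.neg_one_pow
    · exact Or.inr h.neg_one_pow
  rcases h3 with h | h <;> rw [h] <;> omega
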